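/- Let t ∈ ℝ and s > t. Let r : ℝ → [0,∞) be measurable, integrable, vanishing on (−∞,0], with ρ := ∫_ℝ r(x) dx. Let q : ℝ → [0,∞) be measurable, vanishing on (−∞,t], and bounded on [t,s] by a constant C. Then for every n ≥ 1, (q ∗ r^{∗n})(s) ≤ C·ρⁿ; in particular, if ρ < 1 then (q ∗ r^{∗n})(s) → 0 as n → ∞. -/

import Mathlib

open MeasureTheory Real Filter Topology
open scoped ENNReal

/-- Convolution of `[0,∞]`-valued functions on `ℝ` (Lebesgue measure), defined
pointwise: `(f ∗ g)(s) = ∫ f(s−u) g(u) du`. -/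
noncomputable def econv (f g : ℝ → ℝ≥0∞) : ℝ → ℝ≥0∞ :=
  fun s => ∫⁻ u, f (s - u) * g u

/-- `convIter r p i = r^{∗i} ∗ p`, with `convIter r p 0 = p`. In particular
`convIter r r n = r^{∗(n+1)}` is the `(n+1)`-fold convolution power of `r`. -/
noncomputable def convIter (r p : ℝ → ℝ≥0∞) : ℕ → ℝ → ℝ≥0∞
  | 0 => p
  | n + 1 => econv r (convIter r p n)

lemma econv_measurable {f g : ℝ → ℝ≥0∞} (hf : Measurable f) (hg : Measurable g) :
    Measurable (econv f g) := by
  apply Measurable.lintegral_prod_right' (f := fun p : ℝ × ℝ => f (p.1 - p.2) * g p.2)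
  exact (hf.comp (measurable_fst.sub measurable_snd)).mul (hg.comp measurable_snd)

lemma lintegral_econv {f g : ℝ → ℝ≥0∞} (hf : Measurable f) (hg : Measurable g) :
    ∫⁻ x, econv f g x = (∫⁻ x, f x) * ∫⁻ x, g x := by
  have hmeas : Measurable (fun p : ℝ × ℝ => f (p.1 - p.2) * g p.2) :=
    (hf.comp (measurable_fst.sub measurable_snd)).mul (hg.comp measurable_snd)
  calc ∫⁻ x, econv f g x = ∫⁻ x, ∫⁻ u, f (x - u) * g u := rfl
    _ = ∫⁻ u, ∫⁻ x, f (x - u) * g u := lintegral_lintegral_swap hmeas.aemeasurable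
    _ = ∫⁻ u, (∫⁻ x, f (x - u)) * g u := by
        refine lintegral_congr fun u => ?_
        exact lintegral_mul_const (g u) (hf.comp (measurable_sub_const u))
    _ = ∫⁻ u, (∫⁻ x, f x) * g u := by
        refine lintegral_congr fun u => ?_
        rw [lintegral_sub_right_eq_self f u]
    _ = (∫⁻ x, f x) * ∫⁻ x, g x := lintegral_const_mul _ hg

lemma econv_zero {f g : ℝ → ℝ≥0∞} (hf : ∀ x ≤ (0:ℝ), f x = 0)
    (hg : ∀ x ≤ (0:ℝ), g x = 0) : ∀ x ≤ (0:ℝ), econv f g x = 0 := by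
  intro x hx
  have : ∀ u : ℝ, f (x - u) * g u = 0 := by
    intro u
    rcases le_or_gt u 0 with hu | hu
    · rw [hg u hu, mul_zero]
    · rw [hf (x - u) (by linarith), zero_mul]
  simp only [econv, this, lintegral_zero]

/-- The vanishing-remainder estimate used in the proof of Theorem 4.1: if `r ≥ 0` is
measurable, integrable, supported on `(0,∞)` with `ρ = ∫ r`, and `q ≥ 0` is measurable,
vanishes on `(−∞,t]` and is bounded by `C` on `[t,s]` (for `s > t`), then for every
`n ≥ 1` one has `(q ∗ r^{∗n})(s) ≤ C ρⁿ`; in particular, `(q ∗ r^{∗n})(s) → 0` as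
`n → ∞` when `ρ < 1`. Here `r^{∗n}` for `n ≥ 1` is encoded as `convIter R R (n-1)`. -/
theorem remainder_vanishes (t s : ℝ) (hts : t < s) (r q : ℝ → ℝ) (C : ℝ)
    (hrm : Measurable r) (hr0 : ∀ x, 0 ≤ r x) (hrneg : ∀ x ≤ (0 : ℝ), r x = 0)
    (hrint : Integrable r volume)
    (hqm : Measurable q) (hq0 : ∀ x, 0 ≤ q x) (hqt : ∀ x ≤ t, q x = 0)
    (hqC : ∀ x ∈ Set.Icc t s, q x ≤ C) :
    (∀ n : ℕ,
      econv (fun x => ENNReal.ofReal (q x))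
          (convIter (fun x => ENNReal.ofReal (r x)) (fun x => ENNReal.ofReal (r x)) n) s
        ≤ ENNReal.ofReal C * ENNReal.ofReal (∫ x, r x) ^ (n + 1)) ∧
    ((∫ x, r x) < 1 →
      Tendsto
        (fun n : ℕ =>
          econv (fun x => ENNReal.ofReal (q x))
            (convIter (fun x => ENNReal.ofReal (r x)) (fun x => ENNReal.ofReal (r x)) n) s)
        atTop (𝓝 0)) := by
  set R : ℝ → ℝ≥0∞ := fun x => ENNReal.ofReal (r x) with hR
  set Q : ℝ → ℝ≥0∞ := fun x => ENNReal.ofReal (q x) with hQ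
  have hRm : Measurable R := ENNReal.measurable_ofReal.comp hrm
  have hRint : ∫⁻ x, R x = ENNReal.ofReal (∫ x, r x) :=
    (ofReal_integral_eq_lintegral_ofReal hrint (ae_of_all _ hr0)).symm
  have hR0 : ∀ x ≤ (0:ℝ), R x = 0 := fun x hx => by
    simp [hR, hrneg x hx]
  -- Properties of convIter by induction
  have hiter : ∀ n : ℕ, Measurable (convIter R R n) ∧
      (∀ x ≤ (0:ℝ), convIter R R n x = 0) ∧
      (∫⁻ x, convIter R R n x = ENNReal.ofReal (∫ x, r x) ^ (n + 1)) := by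
    intro n
    induction n with
    | zero => exact ⟨hRm, hR0, by simpa [convIter] using hRint⟩
    | succ n ih =>
      obtain ⟨hm, h0, hi⟩ := ih
      refine ⟨econv_measurable hRm hm, econv_zero hR0 h0, ?_⟩
      show ∫⁻ x, econv R (convIter R R n) x = _
      rw [lintegral_econv hRm hm, hRint, hi, pow_succ]
      ring
  have key : ∀ n : ℕ,
      econv Q (convIter R R n) s ≤
        ENNReal.ofReal C * ENNReal.ofReal (∫ x, r x) ^ (n + 1) := by
    intro n
    obtain ⟨hm, h0, hi⟩ := hiter n
    have hbound : ∀ u : ℝ, Q (s - u) * convIter R R n u ≤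
        ENNReal.ofReal C * convIter R R n u := by
      intro u
      rcases le_or_gt u 0 with hu | hu
      · rw [h0 u hu]; simp
      · rcases le_or_gt (s - u) t with hsu | hsu
        · have : Q (s - u) = 0 := by simp [hQ, hqt _ hsu]
          rw [this]; simp
        · refine mul_le_mul_left ?_ _
          exact ENNReal.ofReal_le_ofReal (hqC (s - u) ⟨le_of_lt hsu, by linarith⟩)
    calc econv Q (convIter R R n) s ≤ ∫⁻ u, ENNReal.ofReal C * convIter R R n u :=
          lintegral_mono hbound
      _ = ENNReal.ofReal C * ∫⁻ u, convIter R R n u := lintegral_const_mul _ hm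
      _ = ENNReal.ofReal C * ENNReal.ofReal (∫ x, r x) ^ (n + 1) := by rw [hi]
  refine ⟨key, fun hρ => ?_⟩
  have hlt : ENNReal.ofReal (∫ x, r x) < 1 := by
    rw [← ENNReal.ofReal_one]
    exact ENNReal.ofReal_lt_ofReal_iff_of_nonneg (integral_nonneg hr0) |>.mpr hρ
  have hpow : Tendsto (fun n : ℕ => ENNReal.ofReal (∫ x, r x) ^ (n + 1)) atTop (𝓝 0) :=
    (ENNReal.tendsto_pow_atTop_nhds_zero_of_lt_one hlt).comp (tendsto_add_atTop_nat 1)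
  have hmul : Tendsto (fun n : ℕ =>
      ENNReal.ofReal C * ENNReal.ofReal (∫ x, r x) ^ (n + 1)) atTop (𝓝 0) := by
    have := ENNReal.Tendsto.const_mul (a := ENNReal.ofReal C) hpow (Or.inr ENNReal.ofReal_ne_top)
    simpa using this
  exact tendsto_of_tendsto_of_tendsto_of_le_of_le tendsto_const_nhds hmul
    (fun n => zero_le) key
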